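/- For Newton polygons N₁ and N₂ of finite area, h(N₁ * N₂) = 2·Vol(N₁^[1], N₂^[1]), where Vol(N₁^[1], N₂^[1]) is the mixed volume defined by Vol(λ₁N₁+λ₂N₂) = Vol(N₁)λ₁² + 2Vol(N₁^[1],N₂^[1])λ₁λ₂ + Vol(N₂)λ₂². -/

import Mathlib

open Pointwise MeasureTheory

/-- The positive quadrant in `ℝ²`. -/
def Q2 : Set (ℝ × ℝ) := {p | 0 ≤ p.1 ∧ 0 ≤ p.2}

/-- The elementary Newton polygon `{ℓ/h}`. -/
noncomputable def elemPoly (l h : ℝ) : Set (ℝ × ℝ) :=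
  convexHull ℝ (({((0 : ℝ), h)} + Q2) ∪ ({(l, (0 : ℝ))} + Q2))

/-- The sum (convex hull of the Minkowski sum) of the elementary polygons listed in `L`. -/
noncomputable def sumList (L : List (ℝ × ℝ)) : Set (ℝ × ℝ) :=
  convexHull ℝ (Q2 + (L.map (fun p => elemPoly p.1 p.2)).sum)

/-- The sum of two Newton polygons: convex hull of the Minkowski sum. -/
noncomputable def polySum (N₁ N₂ : Set (ℝ × ℝ)) : Set (ℝ × ℝ) :=
  convexHull ℝ (N₁ + N₂)

/-- The product of decompositions: on elementary polygons,
`{ℓ/h} * {ℓ'/h'} = {ℓℓ' / min(ℓh', ℓ'h)}`, extended bilinearly. -/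
def prodList (L₁ L₂ : List (ℝ × ℝ)) : List (ℝ × ℝ) :=
  L₁.flatMap fun p => L₂.map fun q => (p.1 * q.1, min (p.1 * q.2) (q.1 * p.2))

/-- All lengths and heights in the list are positive. -/
def PosList (L : List (ℝ × ℝ)) : Prop := ∀ p ∈ L, 0 < p.1 ∧ 0 < p.2

/-- The height of a Newton polygon: its intercept with the vertical axis. -/
noncomputable def polyHt (N : Set (ℝ × ℝ)) : ℝ := sInf {y | (0, y) ∈ N}

/-- The area enclosed by a Newton polygon: the area of the complement of the region in the
positive quadrant. -/
noncomputable def polyVol (N : Set (ℝ × ℝ)) : ℝ := (volume (Q2 \ N)).toReal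

/-! ### Auxiliary development -/

open Set

/-- The segment from `(0, p.2)` to `(p.1, 0)`. -/
noncomputable def npSeg (p : ℝ × ℝ) : Set (ℝ × ℝ) := segment ℝ ((0 : ℝ), p.2) (p.1, (0 : ℝ))

/-- Minkowski sum of the segments of a list. -/
noncomputable def npSegSum (L : List (ℝ × ℝ)) : Set (ℝ × ℝ) := (L.map npSeg).sum

/-- The Newton polygon of a list. -/
noncomputable def npN (L : List (ℝ × ℝ)) : Set (ℝ × ℝ) := npSegSum L + Q2

/-- Total height of a list. -/
def npHS (L : List (ℝ × ℝ)) : ℝ := (L.map Prod.snd).sum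

/-- Cross terms. -/
def npCross (L M : List (ℝ × ℝ)) : ℝ :=
  (L.map fun p => (M.map fun q => min (p.1 * q.2) (q.1 * p.2)).sum).sum

/-- Area under the staircase of a list. -/
noncomputable def npV : List (ℝ × ℝ) → ℝ
  | [] => 0
  | p :: L => p.1 * p.2 / 2 + (L.map fun q => min (p.1 * q.2) (q.1 * p.2)).sum + npV L

lemma Q2_eq_Ici : Q2 = Set.Ici ((0, 0) : ℝ × ℝ) := by
  ext p; simp [Q2, Prod.le_def]

lemma convex_Q2 : Convex ℝ Q2 := Q2_eq_Ici ▸ convex_Ici _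

lemma isClosed_Q2 : IsClosed Q2 := Q2_eq_Ici ▸ isClosed_Ici

lemma mem_Q2 {z : ℝ × ℝ} : z ∈ Q2 ↔ 0 ≤ z.1 ∧ 0 ≤ z.2 := Iff.rfl

lemma zero_mem_Q2 : ((0, 0) : ℝ × ℝ) ∈ Q2 := ⟨le_refl 0, le_refl 0⟩

lemma add_mem_Q2 {z w : ℝ × ℝ} (hz : z ∈ Q2) (hw : w ∈ Q2) : z + w ∈ Q2 :=
  ⟨add_nonneg hz.1 hw.1, add_nonneg hz.2 hw.2⟩

lemma Q2_add_Q2 : Q2 + Q2 = Q2 := by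
  apply Subset.antisymm
  · rintro z ⟨x, hx, y, hy, rfl⟩
    exact add_mem_Q2 hx hy
  · intro z hz
    exact ⟨z, hz, 0, ⟨le_refl 0, le_refl 0⟩, add_zero z⟩

lemma mem_npSeg {q z : ℝ × ℝ} :
    z ∈ npSeg q ↔ ∃ t : ℝ, 0 ≤ t ∧ t ≤ 1 ∧ z = (t * q.1, (1 - t) * q.2) := by
  rw [npSeg, segment_eq_image]
  constructor
  · rintro ⟨t, ht, rfl⟩
    refine ⟨t, ht.1, ht.2, ?_⟩
    simp [Prod.ext_iff, smul_eq_mul]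
  · rintro ⟨t, ht0, ht1, rfl⟩
    refine ⟨t, ⟨ht0, ht1⟩, ?_⟩
    simp [Prod.ext_iff, smul_eq_mul]

lemma npSeg_mem_left {q : ℝ × ℝ} : ((0 : ℝ), q.2) ∈ npSeg q := left_mem_segment _ _ _

lemma npSeg_mem_right {q : ℝ × ℝ} : (q.1, (0 : ℝ)) ∈ npSeg q := right_mem_segment _ _ _

lemma npSeg_subset_Q2 {q : ℝ × ℝ} (h1 : 0 ≤ q.1) (h2 : 0 ≤ q.2) : npSeg q ⊆ Q2 := by
  intro z hz
  rcases mem_npSeg.1 hz with ⟨t, ht0, ht1, rfl⟩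
  exact ⟨mul_nonneg ht0 h1, mul_nonneg (by linarith) h2⟩

lemma npN_nil : npN [] = Q2 := by
  simp [npN, npSegSum]

lemma npN_cons (p : ℝ × ℝ) (L : List (ℝ × ℝ)) : npN (p :: L) = npSeg p + npN L := by
  simp [npN, npSegSum, add_assoc]

lemma mem_npN_add {L : List (ℝ × ℝ)} {z w : ℝ × ℝ} (hz : z ∈ npN L) (hw : w ∈ Q2) :
    z + w ∈ npN L := by
  rcases hz with ⟨s, hs, c, hc, rfl⟩
  exact ⟨s, hs, c + w, add_mem_Q2 hc hw, (add_assoc _ _ _).symm⟩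

lemma mem_npN_mono {L : List (ℝ × ℝ)} {z : ℝ × ℝ} {x y : ℝ} (hz : z ∈ npN L)
    (hx : z.1 ≤ x) (hy : z.2 ≤ y) : (x, y) ∈ npN L := by
  have : (x, y) = z + (x - z.1, y - z.2) := by
    simp [Prod.ext_iff]
  rw [this]
  exact mem_npN_add hz ⟨by simpa using hx, by simpa using hy⟩

lemma npN_subset_Q2 {L : List (ℝ × ℝ)} (hL : PosList L) : npN L ⊆ Q2 := by
  induction L with
  | nil => rw [npN_nil]
  | cons p L ih =>
      rw [npN_cons]
      rintro z ⟨s, hs, w, hw, rfl⟩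
      exact add_mem_Q2
        (npSeg_subset_Q2 (hL p (List.mem_cons_self)).1.le
          (hL p (List.mem_cons_self)).2.le hs)
        (ih (fun q hq => hL q (List.mem_cons_of_mem _ hq)) hw)

lemma npHS_nil : npHS [] = 0 := rfl

lemma npHS_cons (p : ℝ × ℝ) (L : List (ℝ × ℝ)) : npHS (p :: L) = p.2 + npHS L := by
  simp [npHS]

lemma npHS_nonneg {L : List (ℝ × ℝ)} (hL : PosList L) : 0 ≤ npHS L := by
  refine List.sum_nonneg ?_
  intro x hx
  rcases List.mem_map.1 hx with ⟨q, hq, rfl⟩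
  exact (hL q hq).2.le

lemma zero_npHS_mem {L : List (ℝ × ℝ)} : ((0 : ℝ), npHS L) ∈ npN L := by
  induction L with
  | nil => rw [npN_nil, npHS_nil]; exact zero_mem_Q2
  | cons p L ih =>
      rw [npN_cons, npHS_cons]
      exact ⟨((0 : ℝ), p.2), npSeg_mem_left, ((0 : ℝ), npHS L), ih, by simp [Prod.ext_iff]⟩

/-- The supporting half-plane of slope `-h/l`. -/
lemma npN_halfplane {l h : ℝ} (hl : 0 ≤ l) (hh : 0 ≤ h) :
    ∀ (L : List (ℝ × ℝ)), (∀ q ∈ L, q.2 * l ≤ q.1 * h) →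
      ∀ z ∈ npN L, l * npHS L ≤ h * z.1 + l * z.2 := by
  intro L
  induction L with
  | nil =>
      intro _ z hz
      rw [npN_nil] at hz
      rw [npHS_nil]
      nlinarith [hz.1, hz.2]
  | cons p L ih =>
      intro hs z hz
      rw [npN_cons] at hz
      rcases hz with ⟨s, hsmem, w, hw, rfl⟩
      rcases mem_npSeg.1 hsmem with ⟨t, ht0, ht1, rfl⟩
      have h1 : l * npHS L ≤ h * w.1 + l * w.2 :=
        ih (fun q hq => hs q (List.mem_cons_of_mem _ hq)) w hw
      have h2 : p.2 * l ≤ p.1 * h := hs p (List.mem_cons_self)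
      rw [npHS_cons]
      have e1 : ((t * p.1, (1 - t) * p.2) + w).1 = t * p.1 + w.1 := rfl
      have e2 : ((t * p.1, (1 - t) * p.2) + w).2 = (1 - t) * p.2 + w.2 := rfl
      rw [e1, e2]
      nlinarith

/-- Staircase shift: one can trade `u*l` of length for `u*h` of height. -/
lemma npN_shift {l h : ℝ} (hl : 0 < l) (hh : 0 ≤ h) :
    ∀ (L : List (ℝ × ℝ)), PosList L → (∀ q ∈ L, q.2 * l ≤ q.1 * h) →
      ∀ u : ℝ, 0 ≤ u → ∀ z ∈ npN L, 0 ≤ z.1 - u * l →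
        (z.1 - u * l, z.2 + u * h) ∈ npN L := by
  intro L
  induction L with
  | nil =>
      intro _ _ u hu z hz hz1
      rw [npN_nil] at hz ⊢
      exact ⟨hz1, add_nonneg hz.2 (mul_nonneg hu hh)⟩
  | cons p L ih =>
      intro hpos hs u hu z hz hz1
      have hp1 : 0 < p.1 := (hpos p (List.mem_cons_self)).1
      have hp2 : 0 < p.2 := (hpos p (List.mem_cons_self)).2
      have hslope : p.2 * l ≤ p.1 * h := hs p (List.mem_cons_self)
      rw [npN_cons] at hz ⊢
      rcases hz with ⟨s, hsmem, w, hw, rfl⟩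
      rcases mem_npSeg.1 hsmem with ⟨t, ht0, ht1, rfl⟩
      by_cases hcase : u * l ≤ t * p.1
      · -- absorb the shift in the segment
        set t₂ : ℝ := t - u * l / p.1 with ht₂
        have ht₂0 : 0 ≤ t₂ := by
          rw [ht₂, sub_nonneg, div_le_iff₀ hp1]
          linarith
        have ht₂1 : t₂ ≤ 1 := by
          have : 0 ≤ u * l / p.1 := div_nonneg (mul_nonneg hu hl.le) hp1.le
          rw [ht₂]; linarith
        have hkey : u * l / p.1 * p.2 ≤ u * h := by
          rw [div_mul_eq_mul_div, div_le_iff₀ hp1]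
          nlinarith
        have hmemw : (w.1, w.2 + (u * h - u * l / p.1 * p.2)) ∈ npN L := by
          have : (w.1, w.2 + (u * h - u * l / p.1 * p.2)) = w + (0, u * h - u * l / p.1 * p.2) := by
            simp [Prod.ext_iff]
          rw [this]
          exact mem_npN_add hw ⟨le_refl 0, by linarith⟩
        have e1 : t₂ * p.1 = t * p.1 - u * l := by
          rw [ht₂]; field_simp
        have e2 : (1 - t₂) * p.2 = (1 - t) * p.2 + u * l / p.1 * p.2 := by
          rw [ht₂]; ring
        refine ⟨(t₂ * p.1, (1 - t₂) * p.2), mem_npSeg.2 ⟨t₂, ht₂0, ht₂1, rfl⟩,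
          (w.1, w.2 + (u * h - u * l / p.1 * p.2)), hmemw, Prod.ext_iff.2 ⟨?_, ?_⟩⟩
        · simp only [Prod.fst_add]
          try dsimp only
          linarith [e1]
        · simp only [Prod.snd_add]
          try dsimp only
          linarith [e2]
      · -- use the tail
        push_neg at hcase
        set u₂ : ℝ := u - t * p.1 / l with hu₂
        have hu₂0 : 0 ≤ u₂ := by
          rw [hu₂, sub_nonneg, div_le_iff₀ hl]
          linarith
        have hw1 : 0 ≤ w.1 - u₂ * l := by
          have : u₂ * l = u * l - t * p.1 := by rw [hu₂]; field_simp
          have hz1' : 0 ≤ t * p.1 + w.1 - u * l := hz1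
          linarith
        have hmem := ih (fun q hq => hpos q (List.mem_cons_of_mem _ hq))
          (fun q hq => hs q (List.mem_cons_of_mem _ hq)) u₂ hu₂0 w hw hw1
        have hpt : ((0 : ℝ), p.2) + (w.1 - u₂ * l, w.2 + u₂ * h) ∈ npSeg p + npN L :=
          ⟨_, npSeg_mem_left, _, hmem, rfl⟩
        have hx : (((0 : ℝ), p.2) + (w.1 - u₂ * l, w.2 + u₂ * h)).1
            = ((t * p.1, (1 - t) * p.2) + w).1 - u * l := by
          have : u₂ * l = u * l - t * p.1 := by rw [hu₂]; field_simp
          simp only [Prod.fst_add]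
          try dsimp
          linarith
        have hy : (((0 : ℝ), p.2) + (w.1 - u₂ * l, w.2 + u₂ * h)).2
            ≤ ((t * p.1, (1 - t) * p.2) + w).2 + u * h := by
          have e : u₂ * h = u * h - t * p.1 / l * h := by rw [hu₂]; ring
          simp only [Prod.snd_add]
          try dsimp
          have hkey : t * p.2 ≤ t * p.1 / l * h := by
            rw [div_mul_eq_mul_div, le_div_iff₀ hl]
            nlinarith
          have hexp : (1 - t) * p.2 = p.2 - t * p.2 := by ring
          have efin : p.2 + (w.2 + u₂ * h) = (1 - t) * p.2 + w.2 + u * h + (t * p.2 - t * p.1 / l * h) := by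
            rw [hexp, e]; ring
          rw [efin]
          linarith
        have := mem_npN_mono (L := p :: L) (by rw [npN_cons]; exact hpt) hx.le hy
        rw [npN_cons] at this
        exact this

lemma mem_npN_cons_of {l h : ℝ} {L : List (ℝ × ℝ)} (hl : 0 < l) (_hh : 0 < h) {z : ℝ × ℝ}
    (h0 : 0 ≤ z.1) (h1 : z.1 ≤ l) (hineq : l * (npHS L + h) ≤ h * z.1 + l * z.2) :
    z ∈ npN ((l, h) :: L) := by
  rw [npN_cons]
  set t : ℝ := z.1 / l with htdef
  have ht0 : 0 ≤ t := div_nonneg h0 hl.le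
  have ht1 : t ≤ 1 := by rw [htdef, div_le_one hl]; exact h1
  have htl : t * l = z.1 := by rw [htdef]; field_simp
  have hseg : (t * l, (1 - t) * h) ∈ npSeg (l, h) := mem_npSeg.2 ⟨t, ht0, ht1, rfl⟩
  have hyge : npHS L ≤ z.2 - (1 - t) * h := by nlinarith [hineq, htl]
  have hup : ((0 : ℝ), z.2 - (1 - t) * h) ∈ npN L :=
    mem_npN_mono zero_npHS_mem (le_refl 0) hyge
  refine ⟨(t * l, (1 - t) * h), hseg, ((0 : ℝ), z.2 - (1 - t) * h), hup, ?_⟩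
  rw [Prod.ext_iff]
  constructor
  · show t * l + 0 = z.1
    rw [add_zero]; exact htl
  · show (1 - t) * h + (z.2 - (1 - t) * h) = z.2
    ring

lemma mem_npN_cons_iff_right {l h : ℝ} {L : List (ℝ × ℝ)} (hl : 0 < l) (hh : 0 < h)
    (hL : PosList L) (hs : ∀ q ∈ L, q.2 * l ≤ q.1 * h) {z : ℝ × ℝ} (hz1 : l ≤ z.1) :
    z ∈ npN ((l, h) :: L) ↔ (z.1 - l, z.2) ∈ npN L := by
  constructor
  · intro hz
    rw [npN_cons] at hz
    rcases hz with ⟨s, hsmem, w, hw, rfl⟩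
    rcases mem_npSeg.1 hsmem with ⟨t, ht0, ht1, rfl⟩
    have hz1' : l ≤ t * l + w.1 := by
      have : ((t * (l, h).1, (1 - t) * (l, h).2) + w).1 = t * l + w.1 := rfl
      rw [this] at hz1
      exact hz1
    have hcond : 0 ≤ w.1 - (1 - t) * l := by nlinarith
    have hsh := npN_shift hl hh.le L hL hs (1 - t) (by linarith) w hw hcond
    have e : (w.1 - (1 - t) * l, w.2 + (1 - t) * h)
        = (((t * (l, h).1, (1 - t) * (l, h).2) + w).1 - l,
           ((t * (l, h).1, (1 - t) * (l, h).2) + w).2) := by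
      simp only [Prod.fst_add, Prod.snd_add, Prod.mk.injEq]
      constructor
      · show w.1 - (1 - t) * l = t * l + w.1 - l
        ring
      · show w.2 + (1 - t) * h = (1 - t) * h + w.2
        ring
    rwa [e] at hsh
  · intro hw
    rw [npN_cons]
    refine ⟨((l, h).1, (0 : ℝ)), npSeg_mem_right, (z.1 - l, z.2), hw, ?_⟩
    rw [Prod.ext_iff]
    constructor
    · show (l, h).1 + (z.1 - l) = z.1
      show l + (z.1 - l) = z.1
      ring
    · show (0 : ℝ) + z.2 = z.2
      ring

lemma npN_decomp {l h : ℝ} {L : List (ℝ × ℝ)} (hl : 0 < l) (hh : 0 < h) (hL : PosList L)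
    (hs : ∀ q ∈ L, q.2 * l ≤ q.1 * h) :
    Q2 \ npN ((l, h) :: L) =
      {z : ℝ × ℝ | 0 ≤ z.1 ∧ z.1 < l ∧ 0 ≤ z.2 ∧ h * z.1 + l * z.2 < l * (npHS L + h)}
      ∪ (fun w => ((l, 0) : ℝ × ℝ) + w) '' (Q2 \ npN L) := by
  have hslopes : ∀ q ∈ (l, h) :: L, q.2 * l ≤ q.1 * h := by
    intro q hq
    rcases List.mem_cons.1 hq with rfl | hq
    · exact le_of_eq (by ring)
    · exact hs q hq
  ext z
  constructor
  · rintro ⟨hzQ, hzM⟩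
    by_cases hcase : z.1 < l
    · left
      refine ⟨hzQ.1, hcase, hzQ.2, ?_⟩
      by_contra hcon
      push_neg at hcon
      exact hzM (mem_npN_cons_of hl hh hzQ.1 hcase.le hcon)
    · right
      push_neg at hcase
      refine ⟨(z.1 - l, z.2), ⟨⟨by show 0 ≤ z.1 - l; linarith, hzQ.2⟩, ?_⟩, ?_⟩
      · intro hmem
        exact hzM ((mem_npN_cons_iff_right hl hh hL hs hcase).2 hmem)
      · rw [Prod.ext_iff]
        constructor
        · show l + (z.1 - l) = z.1
          ring
        · show (0 : ℝ) + z.2 = z.2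
          ring
  · rintro (⟨h0, h1, h2, h3⟩ | ⟨w, ⟨hwQ, hwN⟩, rfl⟩)
    · refine ⟨⟨h0, h2⟩, ?_⟩
      intro hmem
      have hhp := npN_halfplane hl.le hh.le ((l, h) :: L) hslopes z hmem
      rw [npHS_cons] at hhp
      have : l * ((l, h).2 + npHS L) = l * (npHS L + h) := by
        show l * (h + npHS L) = l * (npHS L + h); ring
      rw [this] at hhp
      linarith
    · refine ⟨⟨?_, ?_⟩, ?_⟩
      · show 0 ≤ l + w.1
        have := hwQ.1
        linarith
      · show 0 ≤ 0 + w.2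
        have := hwQ.2
        linarith
      · intro hmem
        have h1 : l ≤ (((l, 0) : ℝ × ℝ) + w).1 := by
          show l ≤ l + w.1
          linarith [hwQ.1]
        have hmem2 := (mem_npN_cons_iff_right hl hh hL hs h1).1 hmem
        have e : ((((l, 0) : ℝ × ℝ) + w).1 - l, (((l, 0) : ℝ × ℝ) + w).2) = w := by
          rw [Prod.ext_iff]
          constructor
          · show l + w.1 - l = w.1
            ring
          · show (0 : ℝ) + w.2 = w.2
            ring
        rw [e] at hmem2
        exact hwN hmem2

lemma isCompact_npSeg (q : ℝ × ℝ) : IsCompact (npSeg q) := by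
  rw [npSeg, segment_eq_image]
  exact isCompact_Icc.image (by continuity)

lemma isCompact_npSegSum (L : List (ℝ × ℝ)) : IsCompact (npSegSum L) := by
  induction L with
  | nil =>
      have : npSegSum [] = ({0} : Set (ℝ × ℝ)) := rfl
      rw [this]
      exact isCompact_singleton
  | cons p L ih =>
      have : npSegSum (p :: L) = npSeg p + npSegSum L := by
        simp [npSegSum]
      rw [this]
      exact (isCompact_npSeg p).add ih

lemma isClosed_npN (L : List (ℝ × ℝ)) : IsClosed (npN L) :=
  IsClosed.add_left_of_isCompact isClosed_Q2 (isCompact_npSegSum L)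

lemma vol_vertline : volume {z : ℝ × ℝ | z.1 = 0} = 0 := by
  have : {z : ℝ × ℝ | z.1 = 0} = ({(0 : ℝ)} : Set ℝ) ×ˢ (Set.univ : Set ℝ) := by
    ext ⟨x, y⟩; simp [Set.mem_prod, eq_comm]
  rw [this, Measure.volume_eq_prod, Measure.prod_prod]
  simp

lemma vol_horizline : volume {z : ℝ × ℝ | z.2 = 0} = 0 := by
  have : {z : ℝ × ℝ | z.2 = 0} = (Set.univ : Set ℝ) ×ˢ ({(0 : ℝ)} : Set ℝ) := by
    ext ⟨x, y⟩; simp [Set.mem_prod, eq_comm]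
  rw [this, Measure.volume_eq_prod, Measure.prod_prod]
  simp

lemma vol_triangle {l h H : ℝ} (hl : 0 < l) (hh : 0 < h) (hH : 0 ≤ H) :
    volume {z : ℝ × ℝ | 0 ≤ z.1 ∧ z.1 < l ∧ 0 ≤ z.2 ∧ h * z.1 + l * z.2 < l * (H + h)}
      = ENNReal.ofReal (l * H + l * h / 2) := by
  set f0 : ℝ → ℝ := fun _ => (0 : ℝ) with hf0def
  set g : ℝ → ℝ := fun x => (H + h) - h / l * x with hgdef
  set S : Set (ℝ × ℝ) :=
    {z : ℝ × ℝ | 0 ≤ z.1 ∧ z.1 < l ∧ 0 ≤ z.2 ∧ h * z.1 + l * z.2 < l * (H + h)} with hSdef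
  have key : ∀ x y : ℝ, (h * x + l * y < l * (H + h) ↔ y < g x) := by
    intro x y
    have e : l * g x = l * (H + h) - h * x := by
      rw [hgdef]
      field_simp
    constructor
    · intro hlt
      have h2 : l * y < l * g x := by linarith
      exact lt_of_mul_lt_mul_left h2 hl.le
    · intro hlt
      have h2 : l * y < l * g x := (mul_lt_mul_iff_right₀ hl).2 hlt
      linarith
  have hsub1 : regionBetween (f0) g (Set.Ioo 0 l) ⊆ S := by
    rintro z ⟨hz1, hz2⟩
    exact ⟨hz1.1.le, hz1.2, hz2.1.le, (key z.1 z.2).2 hz2.2⟩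
  have hsub2 : S ⊆ regionBetween (f0) g (Set.Ioo 0 l)
      ∪ ({z : ℝ × ℝ | z.1 = 0} ∪ {z : ℝ × ℝ | z.2 = 0}) := by
    rintro z ⟨h0, h1, h2, h3⟩
    rcases eq_or_lt_of_le h0 with he | hlt
    · exact Or.inr (Or.inl he.symm)
    rcases eq_or_lt_of_le h2 with he | hlt2
    · exact Or.inr (Or.inr he.symm)
    exact Or.inl ⟨⟨hlt, h1⟩, hlt2, (key z.1 z.2).1 h3⟩
  have hnull : volume ({z : ℝ × ℝ | z.1 = 0} ∪ {z : ℝ × ℝ | z.2 = 0}) = 0 :=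
    measure_union_null vol_vertline vol_horizline
  have hg_int : IntegrableOn g (Set.Ioo 0 l) volume := by
    have : Continuous g := by rw [hgdef]; continuity
    exact (this.integrableOn_Icc (a := 0) (b := l)).mono_set Set.Ioo_subset_Icc_self
  have hf_int : IntegrableOn f0 (Set.Ioo 0 l) volume :=
    integrableOn_const (by rw [Real.volume_Ioo]; exact ENNReal.ofReal_ne_top)
  have hfg : ∀ x ∈ Set.Ioo (0 : ℝ) l, f0 x ≤ g x := by
    intro x hx
    rw [hgdef, hf0def]
    have hxl : h / l * x < h := by
      have : h / l * x < h / l * l := by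
        apply mul_lt_mul_of_pos_left hx.2 (div_pos hh hl)
      rwa [div_mul_cancel₀ h hl.ne'] at this
    simp only
    linarith
  have hRB := volume_regionBetween_eq_integral hf_int hg_int measurableSet_Ioo hfg
  simp only [Pi.sub_apply, hf0def, sub_zero] at hRB
  have hvolRB : volume (regionBetween (f0) g (Set.Ioo 0 l))
      = ENNReal.ofReal (∫ y in Set.Ioo (0 : ℝ) l, g y) := by
    rw [Measure.volume_eq_prod]
    exact hRB
  have hint : (∫ y in Set.Ioo (0 : ℝ) l, g y) = l * H + l * h / 2 := by
    rw [← integral_Ioc_eq_integral_Ioo, ← intervalIntegral.integral_of_le hl.le]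
    have e2 : ∀ x : ℝ, g x = (H + h) - h / l * x := fun x => rfl
    rw [intervalIntegral.integral_congr (g := fun x => (H + h) - h / l * x)
      (fun x _ => e2 x)]
    rw [intervalIntegral.integral_sub intervalIntegrable_const
      (intervalIntegral.intervalIntegrable_id.const_mul (h / l))]
    open intervalIntegral in
    rw [intervalIntegral.integral_const, intervalIntegral.integral_const_mul, integral_id]
    simp only [smul_eq_mul, sub_zero]
    field_simp
    ring
  have hle1 : volume S ≤ volume (regionBetween (f0) g (Set.Ioo 0 l)) := by
    calc volume S ≤ volume (regionBetween (f0) g (Set.Ioo 0 l)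
        ∪ ({z : ℝ × ℝ | z.1 = 0} ∪ {z : ℝ × ℝ | z.2 = 0})) := measure_mono hsub2
      _ ≤ volume (regionBetween (f0) g (Set.Ioo 0 l))
          + volume ({z : ℝ × ℝ | z.1 = 0} ∪ {z : ℝ × ℝ | z.2 = 0}) := measure_union_le _ _
      _ = volume (regionBetween (f0) g (Set.Ioo 0 l)) := by rw [hnull, add_zero]
  have hle2 : volume (regionBetween (f0) g (Set.Ioo 0 l)) ≤ volume S :=
    measure_mono hsub1
  have : volume S = volume (regionBetween (f0) g (Set.Ioo 0 l)) :=
    le_antisymm hle1 hle2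
  rw [this, hvolRB, hint]

lemma vol_step {l h : ℝ} {L : List (ℝ × ℝ)} (hl : 0 < l) (hh : 0 < h) (hL : PosList L)
    (hs : ∀ q ∈ L, q.2 * l ≤ q.1 * h) :
    volume (Q2 \ npN ((l, h) :: L)) =
      volume (Q2 \ npN L) + ENNReal.ofReal (l * npHS L + l * h / 2) := by
  rw [npN_decomp hl hh hL hs]
  have hmeasN : MeasurableSet (Q2 \ npN L) :=
    isClosed_Q2.measurableSet.diff (isClosed_npN L).measurableSet
  have hmeasS : MeasurableSet ((fun w => ((l, 0) : ℝ × ℝ) + w) '' (Q2 \ npN L)) := by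
    rw [Set.image_add_left]
    exact hmeasN.preimage (measurable_const_add _)
  have hdisj : Disjoint
      {z : ℝ × ℝ | 0 ≤ z.1 ∧ z.1 < l ∧ 0 ≤ z.2 ∧ h * z.1 + l * z.2 < l * (npHS L + h)}
      ((fun w => ((l, 0) : ℝ × ℝ) + w) '' (Q2 \ npN L)) := by
    rw [Set.disjoint_left]
    rintro z ⟨_, h1, _, _⟩ ⟨w, ⟨hwQ, _⟩, rfl⟩
    have : (((l, 0) : ℝ × ℝ) + w).1 = l + w.1 := rfl
    rw [this] at h1
    linarith [hwQ.1]
  rw [measure_union hdisj hmeasS]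
  rw [vol_triangle hl hh (npHS_nonneg hL)]
  rw [Set.image_add_left, measure_preimage_add]
  exact add_comm _ _

lemma npN_perm {L L' : List (ℝ × ℝ)} (h : L.Perm L') : npN L = npN L' := by
  unfold npN npSegSum
  rw [(h.map npSeg).sum_eq]

lemma exists_max_slope : ∀ L : List (ℝ × ℝ), PosList L → L ≠ [] →
    ∃ p ∈ L, ∀ q ∈ L, q.2 * p.1 ≤ q.1 * p.2 := by
  intro L
  induction L with
  | nil => intro _ hne; exact absurd rfl hne
  | cons x xs ih =>
      intro hpos _
      rcases eq_or_ne xs [] with rfl | hne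
      · refine ⟨x, List.mem_cons_self, ?_⟩
        intro q hq
        rcases List.mem_cons.1 hq with rfl | hq
        · exact le_of_eq (by ring)
        · simp at hq
      · obtain ⟨p, hpmem, hpmax⟩ := ih (fun q hq => hpos q (List.mem_cons_of_mem _ hq)) hne
        by_cases hcmp : x.2 * p.1 ≤ x.1 * p.2
        · refine ⟨p, List.mem_cons_of_mem _ hpmem, ?_⟩
          intro q hq
          rcases List.mem_cons.1 hq with rfl | hq
          · exact hcmp
          · exact hpmax q hq
        · push_neg at hcmp
          refine ⟨x, List.mem_cons_self, ?_⟩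
          intro q hq
          rcases List.mem_cons.1 hq with rfl | hq
          · exact le_of_eq (by ring)
          · have h1 := hpmax q hq
            have hq1 := (hpos q (List.mem_cons_of_mem _ hq)).1
            have hp1 := (hpos p (List.mem_cons_of_mem _ hpmem)).1
            have hx1 := (hpos x (List.mem_cons_self)).1
            have h2 : q.2 * p.1 * x.1 ≤ q.1 * p.2 * x.1 :=
              mul_le_mul_of_nonneg_right h1 hx1.le
            have h3 : q.1 * (x.1 * p.2) ≤ q.1 * (x.2 * p.1) :=
              mul_le_mul_of_nonneg_left hcmp.le hq1.le
            have h4 : q.2 * x.1 * p.1 ≤ q.1 * x.2 * p.1 := by nlinarith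
            exact le_of_mul_le_mul_right h4 hp1

lemma npV_nonneg : ∀ {L : List (ℝ × ℝ)}, PosList L → 0 ≤ npV L := by
  intro L
  induction L with
  | nil => intro _; exact le_refl 0
  | cons p L ih =>
      intro hL
      have h1 : 0 ≤ p.1 * p.2 / 2 := by
        have := (hL p (List.mem_cons_self)).1
        have := (hL p (List.mem_cons_self)).2
        positivity
      have h2 : 0 ≤ (L.map fun q => min (p.1 * q.2) (q.1 * p.2)).sum := by
        apply List.sum_nonneg
        intro x hx
        rcases List.mem_map.1 hx with ⟨q, hq, rfl⟩
        have hp := hL p (List.mem_cons_self)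
        have hqq := hL q (List.mem_cons_of_mem _ hq)
        exact le_min (mul_nonneg hp.1.le hqq.2.le) (mul_nonneg hqq.1.le hp.2.le)
      have h3 := ih (fun q hq => hL q (List.mem_cons_of_mem _ hq))
      simp only [npV]
      linarith

lemma npV_perm {L L' : List (ℝ × ℝ)} (h : L.Perm L') : npV L = npV L' := by
  induction h with
  | nil => rfl
  | cons x h ih =>
      simp only [npV]
      rw [ih, (h.map fun q => min (x.1 * q.2) (q.1 * x.2)).sum_eq]
  | swap x y l =>
      simp only [npV, List.map_cons, List.sum_cons]
      rw [min_comm (y.1 * x.2) (x.1 * y.2)]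
      ring
  | trans _ _ ih1 ih2 => rw [ih1, ih2]

lemma npV_cons_max {p : ℝ × ℝ} {L : List (ℝ × ℝ)}
    (hmax : ∀ q ∈ L, q.2 * p.1 ≤ q.1 * p.2) :
    npV (p :: L) = p.1 * p.2 / 2 + p.1 * npHS L + npV L := by
  simp only [npV]
  have e : (L.map fun q => min (p.1 * q.2) (q.1 * p.2)) = L.map fun q => p.1 * q.2 := by
    apply List.map_congr_left
    intro q hq
    apply min_eq_left
    have := hmax q hq
    have e2 : p.1 * q.2 = q.2 * p.1 := mul_comm _ _
    linarith
  rw [e, List.sum_map_mul_left]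
  have e3 : (L.map fun q : ℝ × ℝ => q.2) = L.map Prod.snd := rfl
  rw [e3]
  rw [npHS]

lemma vol_master : ∀ (n : ℕ) (L : List (ℝ × ℝ)), L.length ≤ n → PosList L →
    volume (Q2 \ npN L) = ENNReal.ofReal (npV L) := by
  intro n
  induction n with
  | zero =>
      intro L hlen _
      have : L = [] := List.eq_nil_of_length_eq_zero (Nat.le_zero.1 hlen)
      subst this
      rw [npN_nil]
      simp [npV]
  | succ n ih =>
      intro L hlen hL
      rcases eq_or_ne L [] with rfl | hne
      · rw [npN_nil]; simp [npV]
      obtain ⟨p, hp, hmax⟩ := exists_max_slope L hL hne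
      obtain ⟨l₁, l₂, rfl⟩ := List.append_of_mem hp
      set E : List (ℝ × ℝ) := l₁ ++ l₂ with hEdef
      have hperm : (l₁ ++ p :: l₂).Perm (p :: E) := List.perm_middle
      have hE : PosList E := by
        intro q hq
        apply hL q
        rcases List.mem_append.1 hq with hq | hq
        · exact List.mem_append.2 (Or.inl hq)
        · exact List.mem_append.2 (Or.inr (List.mem_cons_of_mem _ hq))
      have hmemE : ∀ q ∈ E, q ∈ l₁ ++ p :: l₂ := by
        intro q hq
        rcases List.mem_append.1 hq with hq | hq
        · exact List.mem_append.2 (Or.inl hq)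
        · exact List.mem_append.2 (Or.inr (List.mem_cons_of_mem _ hq))
      have hp1 : 0 < p.1 := (hL p hp).1
      have hp2 : 0 < p.2 := (hL p hp).2
      have hlen' : E.length ≤ n := by
        have := hlen
        simp only [List.length_append, List.length_cons] at this
        simp only [hEdef, List.length_append]
        omega
      have hslope : ∀ q ∈ E, q.2 * p.1 ≤ q.1 * p.2 := fun q hq => hmax q (hmemE q hq)
      have hstep := vol_step hp1 hp2 hE hslope
      have hstep' : volume (Q2 \ npN (p :: E)) =
          volume (Q2 \ npN E) + ENNReal.ofReal (p.1 * npHS E + p.1 * p.2 / 2) := by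
        simpa only [Prod.mk.eta] using hstep
      rw [npN_perm hperm, hstep', ih E hlen' hE]
      rw [← ENNReal.ofReal_add (npV_nonneg hE)
        (add_nonneg (mul_nonneg hp1.le (npHS_nonneg hE)) (by positivity))]
      rw [npV_perm hperm, npV_cons_max hslope]
      congr 1
      ring

lemma npmin_smul {a : ℝ} (ha : 0 ≤ a) (x y : ℝ) : min (a * x) (a * y) = a * min x y := by
  rcases le_total x y with h | h
  · rw [min_eq_left (mul_le_mul_of_nonneg_left h ha), min_eq_left h]
  · rw [min_eq_right (mul_le_mul_of_nonneg_left h ha), min_eq_right h]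

lemma npCross_nil (M : List (ℝ × ℝ)) : npCross [] M = 0 := rfl

lemma npCross_cons (p : ℝ × ℝ) (L M : List (ℝ × ℝ)) :
    npCross (p :: L) M = (M.map fun q => min (p.1 * q.2) (q.1 * p.2)).sum + npCross L M := by
  simp [npCross]

lemma npV_append (L M : List (ℝ × ℝ)) : npV (L ++ M) = npV L + npV M + npCross L M := by
  induction L with
  | nil => simp [npV, npCross_nil]
  | cons p L ih =>
      simp only [List.cons_append, npV, List.append_eq, List.map_append, List.sum_append, ih,
        npCross_cons]
      ring

lemma npHS_append (L M : List (ℝ × ℝ)) : npHS (L ++ M) = npHS L + npHS M := by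
  simp [npHS]

lemma npHS_prodList (L M : List (ℝ × ℝ)) : npHS (prodList L M) = npCross L M := by
  induction L with
  | nil => rfl
  | cons p L ih =>
      have e : prodList (p :: L) M =
          (M.map fun q => (p.1 * q.1, min (p.1 * q.2) (q.1 * p.2))) ++ prodList L M := by
        simp [prodList]
      rw [e, npHS_append, ih, npCross_cons]
      congr 1
      rw [npHS, List.map_map]
      rfl

lemma posList_prodList {L₁ L₂ : List (ℝ × ℝ)} (h₁ : PosList L₁) (h₂ : PosList L₂) :
    PosList (prodList L₁ L₂) := by
  intro r hr
  rw [prodList, List.mem_flatMap] at hr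
  obtain ⟨p, hp, hr⟩ := hr
  rw [List.mem_map] at hr
  obtain ⟨q, hq, rfl⟩ := hr
  exact ⟨mul_pos (h₁ p hp).1 (h₂ q hq).1,
    lt_min (mul_pos (h₁ p hp).1 (h₂ q hq).2) (mul_pos (h₂ q hq).1 (h₁ p hp).2)⟩

lemma posList_scale {a : ℝ} (ha : 0 < a) {L : List (ℝ × ℝ)} (hL : PosList L) :
    PosList (L.map fun q => (a * q.1, a * q.2)) := by
  intro r hr
  rw [List.mem_map] at hr
  obtain ⟨q, hq, rfl⟩ := hr
  exact ⟨mul_pos ha (hL q hq).1, mul_pos ha (hL q hq).2⟩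

lemma posList_append {L M : List (ℝ × ℝ)} (hL : PosList L) (hM : PosList M) :
    PosList (L ++ M) := by
  intro q hq
  rcases List.mem_append.1 hq with hq | hq
  · exact hL q hq
  · exact hM q hq

lemma npHS_scale (a : ℝ) (L : List (ℝ × ℝ)) :
    npHS (L.map fun q => (a * q.1, a * q.2)) = a * npHS L := by
  rw [npHS, List.map_map]
  have e : (Prod.snd ∘ fun q : ℝ × ℝ => (a * q.1, a * q.2)) = fun q : ℝ × ℝ => a * q.2 := rfl
  rw [e, List.sum_map_mul_left]
  rfl

lemma npV_scale {a : ℝ} (ha : 0 ≤ a) (L : List (ℝ × ℝ)) :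
    npV (L.map fun q => (a * q.1, a * q.2)) = a ^ 2 * npV L := by
  induction L with
  | nil => simp [npV]
  | cons p L ih =>
      simp only [List.map_cons, npV, ih, List.map_map]
      have e : ∀ q ∈ L, ((fun q' : ℝ × ℝ => min ((a * p.1, a * p.2).1 * q'.2)
          (q'.1 * (a * p.1, a * p.2).2)) ∘ fun q : ℝ × ℝ => (a * q.1, a * q.2)) q
          = a ^ 2 * min (p.1 * q.2) (q.1 * p.2) := by
        intro q _
        show min ((a * p.1) * (a * q.2)) ((a * q.1) * (a * p.2))
            = a ^ 2 * min (p.1 * q.2) (q.1 * p.2)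
        have e1 : (a * p.1) * (a * q.2) = a ^ 2 * (p.1 * q.2) := by ring
        have e2 : (a * q.1) * (a * p.2) = a ^ 2 * (q.1 * p.2) := by ring
        rw [e1, e2, npmin_smul (sq_nonneg a)]
      rw [List.map_congr_left e, List.sum_map_mul_left]
      show (a * p.1) * (a * p.2) / 2 + _ + _ = _
      ring

lemma npCross_scale {a b : ℝ} (ha : 0 ≤ a) (hb : 0 ≤ b) (L M : List (ℝ × ℝ)) :
    npCross (L.map fun q => (a * q.1, a * q.2)) (M.map fun q => (b * q.1, b * q.2))
      = (a * b) * npCross L M := by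
  unfold npCross
  rw [List.map_map]
  have e : ∀ p ∈ L, ((fun p' : ℝ × ℝ =>
      ((M.map fun q => (b * q.1, b * q.2)).map fun q => min (p'.1 * q.2) (q.1 * p'.2)).sum)
        ∘ fun q : ℝ × ℝ => (a * q.1, a * q.2)) p
      = a * b * (M.map fun q => min (p.1 * q.2) (q.1 * p.2)).sum := by
    intro p _
    show ((M.map fun q => (b * q.1, b * q.2)).map fun q =>
        min ((a * p.1) * q.2) (q.1 * (a * p.2))).sum = _
    rw [List.map_map]
    have e2 : ∀ q ∈ M, ((fun q' : ℝ × ℝ => min ((a * p.1) * q'.2) (q'.1 * (a * p.2)))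
        ∘ fun q : ℝ × ℝ => (b * q.1, b * q.2)) q
        = (a * b) * min (p.1 * q.2) (q.1 * p.2) := by
      intro q _
      show min ((a * p.1) * (b * q.2)) ((b * q.1) * (a * p.2)) = _
      have e3 : (a * p.1) * (b * q.2) = (a * b) * (p.1 * q.2) := by ring
      have e4 : (b * q.1) * (a * p.2) = (a * b) * (q.1 * p.2) := by ring
      rw [e3, e4, npmin_smul (mul_nonneg ha hb)]
    rw [List.map_congr_left e2, List.sum_map_mul_left]
  rw [List.map_congr_left e, List.sum_map_mul_left]

lemma convex_npSegSum (L : List (ℝ × ℝ)) : Convex ℝ (npSegSum L) := by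
  induction L with
  | nil =>
      show Convex ℝ ({0} : Set (ℝ × ℝ))
      exact convex_singleton 0
  | cons p L ih =>
      have e : npSegSum (p :: L) = npSeg p + npSegSum L := by simp [npSegSum]
      rw [e]
      exact (convex_segment _ _).add ih

lemma convex_npN (L : List (ℝ × ℝ)) : Convex ℝ (npN L) :=
  (convex_npSegSum L).add convex_Q2

lemma elemPoly_eq (l h : ℝ) : elemPoly l h = npSeg (l, h) + Q2 := by
  unfold elemPoly
  apply Set.Subset.antisymm
  · apply convexHull_min
    · rintro z (⟨x, hx, q, hq, rfl⟩ | ⟨x, hx, q, hq, rfl⟩)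
      · rw [Set.mem_singleton_iff] at hx
        subst hx
        exact ⟨((0 : ℝ), h), npSeg_mem_left, q, hq, rfl⟩
      · rw [Set.mem_singleton_iff] at hx
        subst hx
        exact ⟨(l, (0 : ℝ)), npSeg_mem_right, q, hq, rfl⟩
    · exact (convex_segment _ _).add convex_Q2
  · rintro z ⟨s, hs, q, hq, rfl⟩
    rcases mem_npSeg.1 hs with ⟨t, ht0, ht1, rfl⟩
    have h1 : ((0 : ℝ), h) + q ∈ ({((0 : ℝ), h)} + Q2) ∪ ({(l, (0 : ℝ))} + Q2) :=
      Or.inl ⟨((0 : ℝ), h), Set.mem_singleton _, q, hq, rfl⟩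
    have h2 : ((l, (0 : ℝ)) : ℝ × ℝ) + q ∈ ({((0 : ℝ), h)} + Q2) ∪ ({(l, (0 : ℝ))} + Q2) :=
      Or.inr ⟨(l, (0 : ℝ)), Set.mem_singleton _, q, hq, rfl⟩
    have hc := convex_convexHull ℝ (({((0 : ℝ), h)} + Q2) ∪ ({(l, (0 : ℝ))} + Q2))
    have hmem := hc (subset_convexHull ℝ _ h1) (subset_convexHull ℝ _ h2)
      (by linarith : (0 : ℝ) ≤ 1 - t) ht0 (by ring)
    have e : (1 - t) • (((0 : ℝ), h) + q) + t • (((l, (0 : ℝ)) : ℝ × ℝ) + q)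
        = (t * (l, h).1, (1 - t) * (l, h).2) + q := by
      rw [Prod.ext_iff]
      constructor
      · show (1 - t) * (0 + q.1) + t * (l + q.1) = t * l + q.1
        ring
      · show (1 - t) * (h + q.2) + t * (0 + q.2) = (1 - t) * h + q.2
        ring
    show (t * (l, h).1, (1 - t) * (l, h).2) + q ∈
      convexHull ℝ (({((0 : ℝ), h)} + Q2) ∪ ({(l, (0 : ℝ))} + Q2))
    rw [← e]
    exact hmem

lemma Q2_add_npN (L : List (ℝ × ℝ)) : Q2 + npN L = npN L := by
  unfold npN
  calc Q2 + (npSegSum L + Q2) = npSegSum L + (Q2 + Q2) := by ac_rfl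
    _ = npSegSum L + Q2 := by rw [Q2_add_Q2]

lemma sumList_eq_npN (L : List (ℝ × ℝ)) : sumList L = npN L := by
  have key : ∀ L : List (ℝ × ℝ), Q2 + (L.map fun p => elemPoly p.1 p.2).sum = npN L := by
    intro L
    induction L with
    | nil =>
        simp only [List.map_nil, List.sum_nil, add_zero]
        exact npN_nil.symm ▸ rfl
    | cons p L ih =>
        simp only [List.map_cons, List.sum_cons]
        rw [elemPoly_eq, npN_cons, ← ih]
        have e0 : npSeg (p.1, p.2) = npSeg p := rfl
        rw [e0]
        calc Q2 + (npSeg p + Q2 + (L.map fun p => elemPoly p.1 p.2).sum)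
            = npSeg p + ((Q2 + Q2) + (L.map fun p => elemPoly p.1 p.2).sum) := by ac_rfl
          _ = npSeg p + (Q2 + (L.map fun p => elemPoly p.1 p.2).sum) := by rw [Q2_add_Q2]
  rw [sumList, key L]
  exact (convex_npN L).convexHull_eq

lemma vert_slice : ∀ (L : List (ℝ × ℝ)), PosList L →
    ∀ y : ℝ, ((0 : ℝ), y) ∈ npN L → npHS L ≤ y := by
  intro L
  induction L with
  | nil =>
      intro _ y hy
      rw [npN_nil] at hy
      simpa [npHS] using hy.2
  | cons p L ih =>
      intro hL y hy
      rw [npN_cons] at hy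
      obtain ⟨s, hs, w, hw, heq⟩ := hy
      rcases mem_npSeg.1 hs with ⟨t, ht0, ht1, rfl⟩
      have hq : w ∈ Q2 := npN_subset_Q2 (fun q hq => hL q (List.mem_cons_of_mem _ hq)) hw
      have h1 : t * p.1 + w.1 = 0 := congrArg Prod.fst heq
      have hp1 : 0 < p.1 := (hL p (List.mem_cons_self)).1
      have ht : t = 0 := by nlinarith [hq.1]
      have hw1 : w.1 = 0 := by nlinarith [hq.1]
      have h2 : (1 - t) * p.2 + w.2 = y := congrArg Prod.snd heq
      have hw0 : ((0 : ℝ), w.2) ∈ npN L := by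
        have ew : w = ((0 : ℝ), w.2) := by
          rw [Prod.ext_iff]
          exact ⟨hw1, rfl⟩
        rw [← ew]
        exact hw
      have h3 := ih (fun q hq => hL q (List.mem_cons_of_mem _ hq)) w.2 hw0
      rw [npHS_cons]
      subst ht
      linarith

lemma polyHt_npN {L : List (ℝ × ℝ)} (hL : PosList L) : polyHt (npN L) = npHS L := by
  have e : {y : ℝ | ((0 : ℝ), y) ∈ npN L} = Set.Ici (npHS L) := by
    ext y
    constructor
    · exact fun hy => vert_slice L hL y hy
    · intro hy
      exact mem_npN_mono zero_npHS_mem (le_refl 0) hy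
  rw [polyHt, e, csInf_Ici]

lemma smul_set_add' (a : ℝ) (A B : Set (ℝ × ℝ)) : a • (A + B) = a • A + a • B := by
  ext z
  simp only [Set.mem_smul_set, Set.mem_add]
  constructor
  · rintro ⟨w, ⟨x, hx, y, hy, rfl⟩, rfl⟩
    exact ⟨a • x, ⟨x, hx, rfl⟩, a • y, ⟨y, hy, rfl⟩, (smul_add a x y).symm⟩
  · rintro ⟨x', ⟨x, hx, rfl⟩, y', ⟨y, hy, rfl⟩, rfl⟩
    exact ⟨x + y, ⟨x, hx, y, hy, rfl⟩, smul_add a x y⟩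

lemma smul_Q2 {a : ℝ} (ha : 0 < a) : a • Q2 = Q2 := by
  ext z
  simp only [Set.mem_smul_set]
  constructor
  · rintro ⟨w, hw, rfl⟩
    exact ⟨mul_nonneg ha.le hw.1, mul_nonneg ha.le hw.2⟩
  · intro hz
    refine ⟨a⁻¹ • z, ⟨?_, ?_⟩, smul_inv_smul₀ ha.ne' z⟩
    · show 0 ≤ a⁻¹ * z.1
      exact mul_nonneg (inv_nonneg.2 ha.le) hz.1
    · show 0 ≤ a⁻¹ * z.2
      exact mul_nonneg (inv_nonneg.2 ha.le) hz.2

lemma smul_npSeg {a : ℝ} (ha : 0 < a) (q : ℝ × ℝ) :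
    a • npSeg q = npSeg (a * q.1, a * q.2) := by
  ext z
  simp only [Set.mem_smul_set, mem_npSeg]
  constructor
  · rintro ⟨w, ⟨t, ht0, ht1, rfl⟩, rfl⟩
    refine ⟨t, ht0, ht1, ?_⟩
    rw [Prod.ext_iff]
    constructor
    · show a * (t * q.1) = t * (a * q.1); ring
    · show a * ((1 - t) * q.2) = (1 - t) * (a * q.2); ring
  · rintro ⟨t, ht0, ht1, rfl⟩
    refine ⟨(t * q.1, (1 - t) * q.2), ⟨t, ht0, ht1, rfl⟩, ?_⟩
    rw [Prod.ext_iff]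
    constructor
    · show a * (t * q.1) = t * (a * q.1); ring
    · show a * ((1 - t) * q.2) = (1 - t) * (a * q.2); ring

lemma smul_npSegSum {a : ℝ} (ha : 0 < a) (L : List (ℝ × ℝ)) :
    a • npSegSum L = npSegSum (L.map fun q => (a * q.1, a * q.2)) := by
  induction L with
  | nil =>
      show a • ({0} : Set (ℝ × ℝ)) = ({0} : Set (ℝ × ℝ))
      rw [Set.smul_set_singleton, smul_zero]
  | cons p L ih =>
      have e1 : npSegSum (p :: L) = npSeg p + npSegSum L := by simp [npSegSum]
      have e2 : npSegSum ((p :: L).map fun q => (a * q.1, a * q.2))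
          = npSeg (a * p.1, a * p.2) + npSegSum (L.map fun q => (a * q.1, a * q.2)) := by
        simp [npSegSum]
      rw [e1, e2, smul_set_add', smul_npSeg ha, ih]

lemma smul_npN {a : ℝ} (ha : 0 < a) (L : List (ℝ × ℝ)) :
    a • npN L = npN (L.map fun q => (a * q.1, a * q.2)) := by
  unfold npN
  rw [smul_set_add', smul_npSegSum ha, smul_Q2 ha]

lemma npN_add_npN (L M : List (ℝ × ℝ)) : npN L + npN M = npN (L ++ M) := by
  unfold npN npSegSum
  rw [List.map_append, List.sum_append]
  calc ((L.map npSeg).sum + Q2) + ((M.map npSeg).sum + Q2)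
      = ((L.map npSeg).sum + (M.map npSeg).sum) + (Q2 + Q2) := by ac_rfl
    _ = ((L.map npSeg).sum + (M.map npSeg).sum) + Q2 := by rw [Q2_add_Q2]

lemma volume_Q2_top : volume Q2 = ⊤ := by
  rw [Q2_eq_Ici, ← Set.Ici_prod_Ici, Measure.volume_eq_prod, Measure.prod_prod, Real.volume_Ici]
  simp

lemma polyVol_zero : polyVol ({0} : Set (ℝ × ℝ)) = 0 := by
  rw [polyVol]
  have h1 : volume ({0} : Set (ℝ × ℝ)) = 0 := by
    apply measure_mono_null ?_ vol_vertline
    intro z hz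
    rw [Set.mem_singleton_iff] at hz
    subst hz
    show (0 : ℝ × ℝ).1 = 0
    rfl
  rw [measure_diff_null h1, volume_Q2_top]
  rfl

/-- For Newton polygons `N₁, N₂` of finite area, `h(N₁ * N₂) = 2·Vol(N₁^[1], N₂^[1])`, where
the mixed volume `v = Vol(N₁^[1], N₂^[1])` is characterized by
`Vol(λ₁N₁+λ₂N₂) = Vol(N₁)λ₁² + 2vλ₁λ₂ + Vol(N₂)λ₂²`. -/
theorem polyHt_prod_eq_mixedVol (L₁ L₂ : List (ℝ × ℝ)) (h₁ : PosList L₁) (h₂ : PosList L₂)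
    (N₁ N₂ : Set (ℝ × ℝ)) (hN₁ : N₁ = sumList L₁) (hN₂ : N₂ = sumList L₂) :
    ∃ v : ℝ,
      (∀ a b : ℝ, 0 ≤ a → 0 ≤ b →
        polyVol (polySum (a • N₁) (b • N₂)) =
          polyVol N₁ * a ^ 2 + 2 * v * (a * b) + polyVol N₂ * b ^ 2) ∧
      polyHt (sumList (prodList L₁ L₂)) = 2 * v := by
  refine ⟨npCross L₁ L₂ / 2, ?_, ?_⟩
  · intro a b ha hb
    have hN1 : N₁ = npN L₁ := by rw [hN₁, sumList_eq_npN]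
    have hN2 : N₂ = npN L₂ := by rw [hN₂, sumList_eq_npN]
    have hvol : ∀ (L : List (ℝ × ℝ)), PosList L → polyVol (npN L) = npV L := by
      intro L hL
      rw [polyVol, vol_master L.length L le_rfl hL, ENNReal.toReal_ofReal (npV_nonneg hL)]
    have hvol1 : polyVol N₁ = npV L₁ := by rw [hN1]; exact hvol L₁ h₁
    have hvol2 : polyVol N₂ = npV L₂ := by rw [hN2]; exact hvol L₂ h₂
    have hne1 : N₁.Nonempty := ⟨((0 : ℝ), npHS L₁), by rw [hN1]; exact zero_npHS_mem⟩
    have hne2 : N₂.Nonempty := ⟨((0 : ℝ), npHS L₂), by rw [hN2]; exact zero_npHS_mem⟩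
    rcases eq_or_lt_of_le ha with ha0 | ha'
    · rcases eq_or_lt_of_le hb with hb0 | hb'
      · rw [← ha0, ← hb0]
        unfold polySum
        rw [Set.zero_smul_set hne1, Set.zero_smul_set hne2, add_zero]
        have h00 : convexHull ℝ (0 : Set (ℝ × ℝ)) = ({0} : Set (ℝ × ℝ)) :=
          convexHull_singleton 0
        rw [h00, polyVol_zero]
        ring
      · rw [← ha0]
        unfold polySum
        have e2 : b • N₂ = npN (L₂.map fun q => (b * q.1, b * q.2)) := by
          rw [hN2]; exact smul_npN hb' L₂
        rw [Set.zero_smul_set hne1, e2, zero_add, (convex_npN _).convexHull_eq,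
          hvol _ (posList_scale hb' h₂), npV_scale hb, hvol1, hvol2]
        ring
    · rcases eq_or_lt_of_le hb with hb0 | hb'
      · rw [← hb0]
        unfold polySum
        have e1 : a • N₁ = npN (L₁.map fun q => (a * q.1, a * q.2)) := by
          rw [hN1]; exact smul_npN ha' L₁
        rw [Set.zero_smul_set hne2, e1, add_zero, (convex_npN _).convexHull_eq,
          hvol _ (posList_scale ha' h₁), npV_scale ha, hvol1, hvol2]
        ring
      · unfold polySum
        have e1 : a • N₁ = npN (L₁.map fun q => (a * q.1, a * q.2)) := by
          rw [hN1]; exact smul_npN ha' L₁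
        have e2 : b • N₂ = npN (L₂.map fun q => (b * q.1, b * q.2)) := by
          rw [hN2]; exact smul_npN hb' L₂
        rw [e1, e2, npN_add_npN, (convex_npN _).convexHull_eq,
          hvol _ (posList_append (posList_scale ha' h₁) (posList_scale hb' h₂)),
          npV_append, npV_scale ha, npV_scale hb, npCross_scale ha hb, hvol1, hvol2]
        ring
  · rw [sumList_eq_npN, polyHt_npN (posList_prodList h₁ h₂), npHS_prodList]
    ring
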